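/- Let h : ℝ^m → ℝ ∪ {+∞} be proper, convex and lower semicontinuous, and let F : ℝ^m → ℝ^m be L-Lipschitz. Let β ∈ (0, 1/3] and γ = (1−β)/(6L). Given points z₀, z, g ∈ ℝ^m, set z̄ = β z₀ + (1−β) z and z₊ = prox_{γh}(z̄ − γ g). Then the vector v := γ^{-1}(z̄ − z₊) − g satisfies v ∈ ∂h(z₊), and dist²(0, F(z₊) + ∂h(z₊)) ≤ ‖F(z₊) + v‖² ≤ c·( ((1−β)/(12L²))‖g − F(z)‖² + ((1−β)/3)‖z − z₊‖² + β‖z₀ − z₊‖² ), where c = max{ 48L²/(1−β), 498L²/(1−β), 162L² }. -/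

import Mathlib

open scoped RealInnerProductSpace

noncomputable section

/-- `p` is the proximal point `prox_{γ h}(u)` of the extended-real-valued
function `h`. -/
def IsProx {m : ℕ} (h : EuclideanSpace ℝ (Fin m) → EReal) (γ : ℝ)
    (u p : EuclideanSpace ℝ (Fin m)) : Prop :=
  ∀ w, h p + ((1 / (2 * γ) * ‖p - u‖ ^ 2 : ℝ) : EReal)
    ≤ h w + ((1 / (2 * γ) * ‖w - u‖ ^ 2 : ℝ) : EReal)

/-- The convex subdifferential of an extended-real-valued function. -/
def subdiffE {m : ℕ} (h : EuclideanSpace ℝ (Fin m) → EReal)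
    (p : EuclideanSpace ℝ (Fin m)) : Set (EuclideanSpace ℝ (Fin m)) :=
  {v | ∀ w, h p + ((⟪v, w - p⟫ : ℝ) : EReal) ≤ h w}

set_option maxHeartbeats 1600000

/-- Residual bound at the half step of the anchored extragradient method: the
vector `v = γ⁻¹(z̄ − z₊) − g` is a subgradient of `h` at `z₊`, and the squared
residual `dist²(0, F(z₊) + ∂h(z₊))` is controlled by `‖g − F(z)‖²`,
`‖z − z₊‖²` and `β‖z₀ − z₊‖²`. -/
theorem prox_residual_bound
    {m : ℕ} (h : EuclideanSpace ℝ (Fin m) → EReal)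
    (hproper : (∃ x, h x ≠ ⊤) ∧ ∀ x, h x ≠ ⊥)
    (hconv : ∀ (x y : EuclideanSpace ℝ (Fin m)) (a b : ℝ), 0 ≤ a → 0 ≤ b → a + b = 1 →
      h (a • x + b • y) ≤ (a : EReal) * h x + (b : EReal) * h y)
    (hlsc : LowerSemicontinuous h)
    (F : EuclideanSpace ℝ (Fin m) → EuclideanSpace ℝ (Fin m))
    (L : ℝ) (hL : 0 < L) (hFlip : ∀ u v, ‖F u - F v‖ ≤ L * ‖u - v‖)
    (β : ℝ) (hβ : β ∈ Set.Ioc (0 : ℝ) (1 / 3))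
    (γ : ℝ) (hγ : γ = (1 - β) / (6 * L))
    (z₀ zz gg : EuclideanSpace ℝ (Fin m))
    (zbar : EuclideanSpace ℝ (Fin m)) (hzbar : zbar = β • z₀ + (1 - β) • zz)
    (zp : EuclideanSpace ℝ (Fin m)) (hzp : IsProx h γ (zbar - γ • gg) zp)
    (c : ℝ)
    (hc : c = max (max (48 * L ^ 2 / (1 - β)) (498 * L ^ 2 / (1 - β))) (162 * L ^ 2)) :
    γ⁻¹ • (zbar - zp) - gg ∈ subdiffE h zp
      ∧ (Metric.infDist 0 ((fun v => F zp + v) '' subdiffE h zp)) ^ 2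
          ≤ ‖F zp + (γ⁻¹ • (zbar - zp) - gg)‖ ^ 2
      ∧ ‖F zp + (γ⁻¹ • (zbar - zp) - gg)‖ ^ 2
          ≤ c * (((1 - β) / (12 * L ^ 2)) * ‖gg - F zz‖ ^ 2
              + ((1 - β) / 3) * ‖zz - zp‖ ^ 2 + β * ‖z₀ - zp‖ ^ 2) := by
  obtain ⟨⟨x₀, hx₀⟩, hbot⟩ := hproper
  have hβ0 : 0 < β := hβ.1
  have hβ1 : β ≤ 1 / 3 := hβ.2
  have htb : (0:ℝ) < 1 - β := by linarith
  have hγ0 : 0 < γ := by rw [hγ]; positivity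
  set u : EuclideanSpace ℝ (Fin m) := zbar - γ • gg with hu
  set v : EuclideanSpace ℝ (Fin m) := γ⁻¹ • (zbar - zp) - gg with hv
  have hvu : γ • v = u - zp := by
    rw [hv, hu, smul_sub, smul_smul, mul_inv_cancel₀ hγ0.ne', one_smul]
    abel
  -- h zp is finite
  have hzpne : h zp ≠ ⊤ := by
    intro htop
    have h1 := hzp x₀
    rw [htop, EReal.top_add_of_ne_bot (EReal.coe_ne_bot _)] at h1
    exact absurd h1 (EReal.add_lt_top hx₀ (EReal.coe_ne_top _)).not_ge
  set r : ℝ := (h zp).toReal with hr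
  have hzpr : h zp = (r : EReal) := (EReal.coe_toReal hzpne (hbot zp)).symm
  -- Part 1 : subgradient
  have part1 : v ∈ subdiffE h zp := by
    intro w
    by_cases hw : h w = ⊤
    · rw [hw]; exact le_top
    have hws : h w = ((h w).toReal : EReal) := (EReal.coe_toReal hw (hbot w)).symm
    set s : ℝ := (h w).toReal with hs
    rw [hzpr, hws, ← EReal.coe_add, EReal.coe_le_coe_iff]
    set I : ℝ := ⟪v, w - zp⟫ with hI
    set Q : ℝ := ‖w - zp‖ ^ 2 with hQ
    have key : ∀ τ : ℝ, 0 < τ → τ ≤ 1 → r + I ≤ s + τ * (1 / (2 * γ)) * Q := by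
      intro τ hτ0 hτ1
      set wt : EuclideanSpace ℝ (Fin m) := zp + τ • (w - zp) with hwt
      have hwt2 : wt = (1 - τ) • zp + τ • w := by rw [hwt]; module
      have hcv : h wt ≤ (((1 - τ) * r + τ * s : ℝ) : EReal) := by
        rw [hwt2]
        calc h ((1 - τ) • zp + τ • w) ≤ ((1 - τ : ℝ) : EReal) * h zp + ((τ:ℝ) : EReal) * h w :=
              hconv zp w (1 - τ) τ (by linarith) hτ0.le (by ring)
          _ = (((1 - τ) * r + τ * s : ℝ) : EReal) := by
              rw [hzpr, hws, ← EReal.coe_mul, ← EReal.coe_mul, ← EReal.coe_add]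
      have hchain := (hzp wt).trans (add_le_add_left hcv _)
      rw [hzpr, ← EReal.coe_add, ← EReal.coe_add, EReal.coe_le_coe_iff] at hchain
      -- compute ‖wt - u‖ ^ 2
      have hwtu : wt - u = (zp - u) + τ • (w - zp) := by rw [hwt]; abel
      have hinner : ⟪zp - u, w - zp⟫ = -(γ * I) := by
        have hzu : zp - u = -(γ • v) := by rw [hvu]; abel
        rw [hzu, inner_neg_left, real_inner_smul_left, hI]
      have hnorm : ‖wt - u‖ ^ 2 = ‖zp - u‖ ^ 2 + 2 * (τ * -(γ * I)) + τ ^ 2 * Q := by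
        rw [hwtu, norm_add_sq_real, real_inner_smul_right, hinner, norm_smul, mul_pow,
          Real.norm_eq_abs, sq_abs, hQ]
      rw [hnorm] at hchain
      have hexp : 1 / (2 * γ) * (‖zp - u‖ ^ 2 + 2 * (τ * -(γ * I)) + τ ^ 2 * Q)
          = 1 / (2 * γ) * ‖zp - u‖ ^ 2 - τ * I + 1 / (2 * γ) * τ ^ 2 * Q := by
        field_simp
        ring
      rw [hexp] at hchain
      have hmul : τ * (r + I) ≤ τ * (s + τ * (1 / (2 * γ)) * Q) := by nlinarith
      exact le_of_mul_le_mul_left hmul hτ0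
    refine le_of_forall_pos_le_add ?_
    intro ε hε
    set τ : ℝ := min 1 (2 * γ * ε / (Q + 1)) with hτ
    have hQ0 : (0:ℝ) ≤ Q := sq_nonneg _
    have hτ0 : 0 < τ := lt_min one_pos (by positivity)
    have hτ1 : τ ≤ 1 := min_le_left _ _
    have h2 : τ ≤ 2 * γ * ε / (Q + 1) := min_le_right _ _
    have h3 : τ * (Q + 1) ≤ 2 * γ * ε := by
      rw [← le_div_iff₀ (by positivity)]; exact h2
    have h4 : τ * (1 / (2 * γ)) * Q ≤ ε := by
      have heq : τ * (1 / (2 * γ)) * Q = τ * Q / (2 * γ) := by ring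
      rw [heq, div_le_iff₀ (by positivity)]
      nlinarith
    linarith [key τ hτ0 hτ1]
  refine ⟨part1, ?_, ?_⟩
  -- Part 2
  · have hmem : F zp + v ∈ (fun w => F zp + w) '' subdiffE h zp := ⟨v, part1, rfl⟩
    have h1 : Metric.infDist 0 ((fun w => F zp + w) '' subdiffE h zp) ≤ dist 0 (F zp + v) :=
      Metric.infDist_le_dist_of_mem hmem
    rw [dist_zero_left] at h1
    exact pow_le_pow_left₀ Metric.infDist_nonneg h1 2
  -- Part 3
  · have hγinv : γ⁻¹ = 6 * L / (1 - β) := by rw [hγ, inv_div]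
    set a : EuclideanSpace ℝ (Fin m) := F zp - F zz with ha
    set b : EuclideanSpace ℝ (Fin m) := F zz - gg with hb
    set cc : EuclideanSpace ℝ (Fin m) := (γ⁻¹ * β) • (z₀ - zp) with hcc
    set d : EuclideanSpace ℝ (Fin m) := (γ⁻¹ * (1 - β)) • (zz - zp) with hd
    have hsum : F zp + v = a + b + cc + d := by
      rw [hv, hzbar, ha, hb, hcc, hd]
      module
    set Z : ℝ := ‖zz - zp‖ with hZ
    set Z0 : ℝ := ‖z₀ - zp‖ with hZ0
    set G : ℝ := ‖gg - F zz‖ with hG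
    have hna : ‖a‖ ≤ L * Z := by
      rw [ha, hZ]; calc ‖F zp - F zz‖ ≤ L * ‖zp - zz‖ := hFlip zp zz
        _ = L * ‖zz - zp‖ := by rw [norm_sub_rev]
    have hnb : ‖b‖ = G := by rw [hb, hG, norm_sub_rev]
    have hnc : ‖cc‖ = (6 * L * β / (1 - β)) * Z0 := by
      rw [hcc, norm_smul, Real.norm_eq_abs, abs_of_pos (by rw [hγinv]; positivity), hγinv, hZ0]
      ring
    have hnd : ‖d‖ = (6 * L) * Z := by
      rw [hd, norm_smul, Real.norm_eq_abs, abs_of_pos (by rw [hγinv]; positivity), hγinv, hZ]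
      field_simp
    have hS : ‖F zp + v‖ ≤ ‖a‖ + ‖b‖ + ‖cc‖ + ‖d‖ := by
      rw [hsum]
      calc ‖a + b + cc + d‖ ≤ ‖a + b + cc‖ + ‖d‖ := norm_add_le _ _
        _ ≤ (‖a + b‖ + ‖cc‖) + ‖d‖ := by linarith [norm_add_le (a + b) cc]
        _ ≤ ((‖a‖ + ‖b‖) + ‖cc‖) + ‖d‖ := by linarith [norm_add_le a b]
    have hS2 : ‖F zp + v‖ ≤ L * Z + G + (6 * L * β / (1 - β)) * Z0 + 6 * L * Z := by
      rw [hnb, hnc, hnd] at hS; linarith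
    have hZ0nn : (0:ℝ) ≤ Z0 := norm_nonneg _
    have hZnn : (0:ℝ) ≤ Z := norm_nonneg _
    have hGnn : (0:ℝ) ≤ G := norm_nonneg _
    have hSnn : (0:ℝ) ≤ ‖F zp + v‖ := norm_nonneg _
    have hsq : ‖F zp + v‖ ^ 2 ≤ (L * Z + G + (6 * L * β / (1 - β)) * Z0 + 6 * L * Z) ^ 2 :=
      pow_le_pow_left₀ hSnn hS2 2
    have hκ : ((6 * L * β / (1 - β)) : ℝ) ^ 2 = 36 * L ^ 2 * β ^ 2 / (1 - β) ^ 2 := by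
      rw [div_pow]; ring_nf
    have hfour : (L * Z + G + (6 * L * β / (1 - β)) * Z0 + 6 * L * Z) ^ 2
        ≤ 4 * ((L * Z) ^ 2 + G ^ 2 + ((6 * L * β / (1 - β)) * Z0) ^ 2 + (6 * L * Z) ^ 2) := by
      nlinarith [sq_nonneg (L * Z - G), sq_nonneg (L * Z - (6 * L * β / (1 - β)) * Z0),
        sq_nonneg (L * Z - 6 * L * Z), sq_nonneg (G - (6 * L * β / (1 - β)) * Z0),
        sq_nonneg (G - 6 * L * Z), sq_nonneg ((6 * L * β / (1 - β)) * Z0 - 6 * L * Z)]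
    have hc1 : 48 * L ^ 2 / (1 - β) ≤ c := hc ▸ le_max_of_le_left (le_max_left _ _)
    have hc2 : 498 * L ^ 2 / (1 - β) ≤ c := hc ▸ le_max_of_le_left (le_max_right _ _)
    have hc3 : 162 * L ^ 2 ≤ c := hc ▸ le_max_right _ _
    have hc1' : 4 ≤ c * ((1 - β) / (12 * L ^ 2)) := by
      rw [div_le_iff₀ htb] at hc1
      rw [mul_div_assoc', le_div_iff₀ (by positivity)]
      linarith
    have hc2' : 148 * L ^ 2 ≤ c * ((1 - β) / 3) := by
      rw [div_le_iff₀ htb] at hc2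
      rw [mul_div_assoc', le_div_iff₀ (by norm_num)]
      linarith [sq_nonneg L]
    have hc3' : 4 * (36 * L ^ 2 * β ^ 2 / (1 - β) ^ 2) ≤ c * β := by
      rw [show (4:ℝ) * (36 * L ^ 2 * β ^ 2 / (1 - β) ^ 2)
          = 144 * L ^ 2 * β ^ 2 / (1 - β) ^ 2 by ring, div_le_iff₀ (by positivity)]
      have k2 : 144 * β ≤ 162 * (1 - β) ^ 2 := by nlinarith
      have k3 := mul_le_mul_of_nonneg_right
        (mul_le_mul_of_nonneg_right hc3 hβ0.le) (sq_nonneg (1 - β))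
      have k4 := mul_le_mul_of_nonneg_left k2 (mul_nonneg (sq_nonneg L) hβ0.le)
      nlinarith [k3, k4]
    have e1 := mul_le_mul_of_nonneg_right hc1' (sq_nonneg G)
    have e2 := mul_le_mul_of_nonneg_right hc2' (sq_nonneg Z)
    have e3 := mul_le_mul_of_nonneg_right hc3' (sq_nonneg Z0)
    have hmid : 4 * ((L * Z) ^ 2 + G ^ 2 + ((6 * L * β / (1 - β)) * Z0) ^ 2 + (6 * L * Z) ^ 2)
        ≤ c * (((1 - β) / (12 * L ^ 2)) * G ^ 2 + ((1 - β) / 3) * Z ^ 2 + β * Z0 ^ 2) := by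
      have hκ' : ((6 * L * β / (1 - β)) * Z0) ^ 2 = (36 * L ^ 2 * β ^ 2 / (1 - β) ^ 2) * Z0 ^ 2 := by
        rw [mul_pow, hκ]
      rw [hκ']
      linarith [e1, e2, e3]
    calc ‖F zp + v‖ ^ 2 ≤ _ := hsq
      _ ≤ _ := hfour
      _ ≤ _ := hmid
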